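/- Let k < l be natural numbers, let m ∈ {k, …, l−1} minimize m' ↦ T_opt(k, m') + T(m', l) over {k, …, l−1}, and let S' ⊆ {k+1, …, m−1} be a finite set with chainSum T ({k} ∪ S' ∪ {m}) = T_opt(k, m). Then the set S'' := S' ∪ ({m} \ {k}) satisfies S'' ⊆ {k+1, …, l−1} and chainSum T ({k} ∪ S'' ∪ {l}) = T_opt(k, l); that is, the recursive construction of Algorithm 1 produces a merge pattern attaining the optimal latency T_opt(k, l). -/

import Mathlib

noncomputable section

/-- Chain sum of `f` over the consecutive pairs of the elements of `P` in increasing order. -/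
def chainSum (f : ℕ → ℕ → ℝ) (P : Finset ℕ) : ℝ :=
  (List.zipWith f (P.sort (· ≤ ·)) (P.sort (· ≤ ·)).tail).sum

/-- Optimal latency `T_opt(k,l)`: the minimum of `chainSum T ({k} ∪ S ∪ {l})`
over all finite sets `S ⊆ {k+1,…,l−1}`. -/
def Topt (T : ℕ → ℕ → ℝ) (k l : ℕ) : ℝ :=
  ((Finset.Ioo k l).powerset.image (fun S => chainSum T ({k} ∪ S ∪ {l}))).min'
    ((Finset.powerset_nonempty _).image _)

lemma chainList_concat (f : ℕ → ℕ → ℝ) :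
    ∀ (L : List ℕ) (hL : L ≠ []) (b : ℕ),
      (List.zipWith f (L ++ [b]) (L ++ [b]).tail).sum
        = (List.zipWith f L L.tail).sum + f (L.getLast hL) b := by
  intro L
  induction L with
  | nil => simp
  | cons a L ih =>
    intro _ b
    cases L with
    | nil => simp
    | cons d L' =>
      have := ih (by simp) b
      simp only [List.cons_append, List.tail_cons, List.zipWith_cons_cons, List.sum_cons] at *
      rw [this, List.getLast_cons (by simp : (d :: L') ≠ [])]
      ring

lemma sort_insert_top (P : Finset ℕ) (l : ℕ) (hl : ∀ x ∈ P, x < l) :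
    (insert l P).sort (· ≤ ·) = P.sort (· ≤ ·) ++ [l] := by
  have hnotmem : l ∉ P := fun h => lt_irrefl l (hl l h)
  refine (fun h1 h2 => List.Perm.eq_of_pairwise' (Finset.pairwise_sort _ _) h2 h1) ?_ ?_
  · rw [← Multiset.coe_eq_coe]
    rw [← Multiset.coe_add]
    simp [Finset.sort_eq, Finset.insert_val, Multiset.ndinsert_of_notMem hnotmem]
    rw [add_comm]; rfl
  · rw [List.pairwise_append]
    refine ⟨Finset.pairwise_sort _ _, by simp, ?_⟩
    intro x hx y hy
    simp at hy; subst hy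
    exact (hl x (by simpa using (Finset.mem_sort _).mp hx)).le

lemma sort_ne_nil (P : Finset ℕ) (hP : P.Nonempty) : P.sort (· ≤ ·) ≠ [] := by
  intro h
  have := Finset.length_sort (s := P) (· ≤ ·)
  rw [h] at this
  exact hP.ne_empty (Finset.card_eq_zero.mp this.symm)

lemma chainSum_insert_top (T : ℕ → ℕ → ℝ) (P : Finset ℕ) (hP : P.Nonempty) (l : ℕ)
    (hl : ∀ x ∈ P, x < l) :
    chainSum T (insert l P) = chainSum T P + T (P.max' hP) l := by
  have hL := sort_ne_nil P hP
  rw [chainSum, sort_insert_top P l hl, chainList_concat T _ hL l]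
  congr 1
  rw [List.getLast_eq_getElem, Finset.max'_eq_sorted_last]

lemma chainSum_singleton (T : ℕ → ℕ → ℝ) (a : ℕ) : chainSum T {a} = 0 := by
  simp [chainSum]

lemma Topt_le (T : ℕ → ℕ → ℝ) (k l : ℕ) (S : Finset ℕ) (hS : S ⊆ Finset.Ioo k l) :
    Topt T k l ≤ chainSum T ({k} ∪ S ∪ {l}) := by
  apply Finset.min'_le
  exact Finset.mem_image_of_mem _ (Finset.mem_powerset.mpr hS)

lemma Topt_self (T : ℕ → ℕ → ℝ) (k : ℕ) : Topt T k k = 0 := by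
  have : (Finset.Ioo k k).powerset = {∅} := by simp
  simp [Topt, this, chainSum]

/-- The recursive construction of Algorithm 1 produces a merge pattern attaining the
optimal latency `T_opt(k,l)`. -/
theorem algorithm1_attains_Topt (T : ℕ → ℕ → ℝ) (k l m : ℕ) (hkl : k < l)
    (hm : m ∈ Finset.Ico k l)
    (hmin : ∀ m' ∈ Finset.Ico k l, Topt T k m + T m l ≤ Topt T k m' + T m' l)
    (S' : Finset ℕ) (hS' : S' ⊆ Finset.Ioo k m)
    (hval : chainSum T ({k} ∪ S' ∪ {m}) = Topt T k m) :
    S' ∪ ({m} \ {k}) ⊆ Finset.Ioo k l ∧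
    chainSum T ({k} ∪ (S' ∪ ({m} \ {k})) ∪ {l}) = Topt T k l := by
  obtain ⟨hkm, hml⟩ := Finset.mem_Ico.mp hm
  -- subset claim
  have hsub : S' ∪ ({m} \ {k}) ⊆ Finset.Ioo k l := by
    intro x hx
    rcases Finset.mem_union.mp hx with hx | hx
    · have := hS' hx
      rw [Finset.mem_Ioo] at this ⊢
      exact ⟨this.1, this.2.trans hml⟩
    · simp only [Finset.mem_sdiff, Finset.mem_singleton] at hx
      obtain ⟨rfl, hne⟩ := hx
      exact Finset.mem_Ioo.mpr ⟨lt_of_le_of_ne hkm (Ne.symm hne), hml⟩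
  refine ⟨hsub, ?_⟩
  -- the constructed set attains value Topt k m + T m l
  have hA : chainSum T ({k} ∪ (S' ∪ ({m} \ {k})) ∪ {l}) = Topt T k m + T m l := by
    by_cases hkmeq : m = k
    · subst hkmeq
      have hS'e : S' = ∅ := Finset.subset_empty.mp (by simpa using hS')
      rw [hS'e]
      simp only [Finset.sdiff_self, Finset.union_empty, Finset.empty_union]
      have hset : ({m} : Finset ℕ) ∪ {l} = insert l {m} := by ext x; simp [or_comm]
      rw [hset, chainSum_insert_top T {m} ⟨m, by simp⟩ l
        (by intro x hx; simp at hx; omega), Topt_self]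
      simp [chainSum_singleton]
    · have hklt : k < m := lt_of_le_of_ne hkm (Ne.symm hkmeq)
      have hdiff : ({m} : Finset ℕ) \ {k} = {m} := by
        ext x; simp; omega
      set P : Finset ℕ := {k} ∪ S' ∪ {m} with hP
      have hPne : P.Nonempty := ⟨k, by simp [hP]⟩
      have hPle : ∀ x ∈ P, x ≤ m := by
        intro x hx
        simp only [hP, Finset.mem_union, Finset.mem_singleton] at hx
        rcases hx with (rfl | hx) | rfl
        · exact hklt.le
        · exact (Finset.mem_Ioo.mp (hS' hx)).2.le
        · exact le_rfl
      have hmax : P.max' hPne = m := le_antisymm (Finset.max'_le _ _ _ hPle)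
        (Finset.le_max' _ _ (by simp [hP]))
      have hlP : ∀ x ∈ P, x < l := fun x hx => lt_of_le_of_lt (hPle x hx) hml
      have heq : {k} ∪ (S' ∪ ({m} \ {k})) ∪ {l} = insert l P := by
        rw [hdiff]
        ext x; simp [hP, Finset.mem_insert]; tauto
      rw [heq, chainSum_insert_top T P hPne l hlP, hmax, hval]
  -- Topt k l ≤ Topt k m + T m l
  have hB : Topt T k l ≤ Topt T k m + T m l := by
    rw [← hA]; exact Topt_le T k l _ hsub
  -- Topt k m + T m l ≤ Topt k l
  have hC : Topt T k m + T m l ≤ Topt T k l := by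
    apply Finset.le_min'
    intro v hv
    obtain ⟨S, hSmem, rfl⟩ := Finset.mem_image.mp hv
    have hS : S ⊆ Finset.Ioo k l := Finset.mem_powerset.mp hSmem
    set Q : Finset ℕ := {k} ∪ S with hQ
    have hQne : Q.Nonempty := ⟨k, by simp [hQ]⟩
    set m₀ := Q.max' hQne with hm₀
    have hkQ : k ∈ Q := by simp [hQ]
    have hkm₀ : k ≤ m₀ := Finset.le_max' _ _ hkQ
    have hm₀l : m₀ < l := by
      have := Finset.max'_mem Q hQne
      simp only [hQ, Finset.mem_union, Finset.mem_singleton] at this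
      rcases this with h | h
      · exact lt_of_eq_of_lt h hkl
      · exact (Finset.mem_Ioo.mp (hS h)).2
    have hlQ : ∀ x ∈ Q, x < l := by
      intro x hx
      simp only [hQ, Finset.mem_union, Finset.mem_singleton] at hx
      rcases hx with rfl | hx
      · exact hkl
      · exact (Finset.mem_Ioo.mp (hS hx)).2
    have heq : {k} ∪ S ∪ {l} = insert l Q := by
      ext x; simp [hQ, Finset.mem_insert]; tauto
    have hsplit : chainSum T ({k} ∪ S ∪ {l}) = chainSum T Q + T m₀ l := by
      rw [heq, chainSum_insert_top T Q hQne l hlQ]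
    have hQge : Topt T k m₀ ≤ chainSum T Q := by
      by_cases h : m₀ = k
      · have hSe : S = ∅ := by
          rw [Finset.eq_empty_iff_forall_notMem]
          intro x hx
          have h1 : k < x := (Finset.mem_Ioo.mp (hS hx)).1
          have h2 : x ≤ m₀ := Finset.le_max' _ _ (by simp [hQ, hx])
          omega
        rw [h, Topt_self]
        rw [hQ, hSe]
        simp [chainSum_singleton]
      · have hkm₀' : k < m₀ := lt_of_le_of_ne hkm₀ (Ne.symm h)
        have hm₀S : m₀ ∈ S := by
          have := Finset.max'_mem Q hQne
          simp only [hQ, Finset.mem_union, Finset.mem_singleton] at this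
          rcases this with h' | h'
          · exact absurd h' h
          · exact h'
        have hS₀ : S.erase m₀ ⊆ Finset.Ioo k m₀ := by
          intro x hx
          obtain ⟨hne, hxS⟩ := Finset.mem_erase.mp hx
          have h1 : k < x := (Finset.mem_Ioo.mp (hS hxS)).1
          have h2 : x ≤ m₀ := Finset.le_max' _ _ (by simp [hQ, hxS])
          exact Finset.mem_Ioo.mpr ⟨h1, lt_of_le_of_ne h2 hne⟩
        have hQeq : Q = {k} ∪ S.erase m₀ ∪ {m₀} := by
          ext x
          simp only [hQ, Finset.mem_union, Finset.mem_singleton, Finset.mem_erase]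
          constructor
          · rintro (rfl | hx)
            · tauto
            · by_cases hx' : x = m₀ <;> tauto
          · rintro ((rfl | ⟨_, hx⟩) | rfl) <;> tauto
        calc Topt T k m₀ ≤ chainSum T ({k} ∪ S.erase m₀ ∪ {m₀}) := Topt_le T k m₀ _ hS₀
          _ = chainSum T Q := by rw [← hQeq]
    calc Topt T k m + T m l ≤ Topt T k m₀ + T m₀ l :=
          hmin m₀ (Finset.mem_Ico.mpr ⟨hkm₀, hm₀l⟩)
      _ ≤ chainSum T Q + T m₀ l := by linarith
      _ = chainSum T ({k} ∪ S ∪ {l}) := hsplit.symm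
  rw [hA, le_antisymm hB hC]
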